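/- Asymptotic order of the success probability in cycles under uniform transaction rates: for integers n ≥ 2 and c ≥ 1 set r = c/(c+1) and define p(n,c) = (1/(n−1)) · ∑_{l=1}^{n−1} (r^l + r^{n−l} − 2r^n)/(1 − r^n). Then there exist absolute constants A, B > 0 such that for every integer c ≥ 1 there is an N with A·c/n ≤ p(n,c) ≤ B·c/n for all n ≥ N. In particular, for fixed c the steady-state success probability of the cycle network under a uniform transaction regime is Θ(c/n). -/

import Mathlib

noncomputable def pcyc (n c : ℕ) : ℝ :=
  (1 / ((n : ℝ) - 1)) * ∑ l ∈ Finset.Icc 1 (n - 1),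
    (((c : ℝ) / ((c : ℝ) + 1)) ^ l + ((c : ℝ) / ((c : ℝ) + 1)) ^ (n - l) -
        2 * ((c : ℝ) / ((c : ℝ) + 1)) ^ n) /
      (1 - ((c : ℝ) / ((c : ℝ) + 1)) ^ n)

lemma pcyc_sum_eq (n c : ℕ) (hn : 2 ≤ n) (hc : 1 ≤ c) :
    ∑ l ∈ Finset.Icc 1 (n - 1),
      (((c : ℝ) / ((c : ℝ) + 1)) ^ l + ((c : ℝ) / ((c : ℝ) + 1)) ^ (n - l) -
          2 * ((c : ℝ) / ((c : ℝ) + 1)) ^ n) /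
        (1 - ((c : ℝ) / ((c : ℝ) + 1)) ^ n)
    = (2 * ((c : ℝ) - ((c : ℝ) + 1) * ((c : ℝ) / ((c : ℝ) + 1)) ^ n)
        - 2 * ((n : ℝ) - 1) * ((c : ℝ) / ((c : ℝ) + 1)) ^ n) /
      (1 - ((c : ℝ) / ((c : ℝ) + 1)) ^ n) := by
  set r : ℝ := (c : ℝ) / ((c : ℝ) + 1) with hr
  have hc1 : (0 : ℝ) < (c : ℝ) + 1 := by positivity
  have hc0 : (0 : ℝ) < (c : ℝ) := by exact_mod_cast hc
  have hr0 : 0 < r := by positivity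
  have hr1 : r < 1 := by rw [hr, div_lt_one hc1]; linarith
  have hrev : ∑ l ∈ Finset.Icc 1 (n - 1), r ^ (n - l)
      = ∑ l ∈ Finset.Icc 1 (n - 1), r ^ l := by
    refine Finset.sum_nbij' (fun l ↦ n - l) (fun l ↦ n - l) ?_ ?_ ?_ ?_ ?_ <;>
        simp only [Finset.mem_Icc] <;> intro a ha
    · omega
    · omega
    · omega
    · omega
    · trivial
  have hgeom : ∑ l ∈ Finset.Icc 1 (n - 1), r ^ l = (c : ℝ) - ((c : ℝ) + 1) * r ^ n := by
    have hins : Finset.range n = insert 0 (Finset.Icc 1 (n - 1)) := by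
      ext x; simp only [Finset.mem_range, Finset.mem_insert, Finset.mem_Icc]; omega
    have h0 : ∑ l ∈ Finset.range n, r ^ l = 1 + ∑ l ∈ Finset.Icc 1 (n - 1), r ^ l := by
      rw [hins, Finset.sum_insert (by simp)]
      norm_num
    have h1 : ∑ l ∈ Finset.range n, r ^ l = (1 - r ^ n) / (1 - r) := by
      rw [geom_sum_eq (by linarith)]
      rw [div_eq_div_iff (by linarith) (by linarith)]; ring
    have h2 : 1 - r = 1 / ((c : ℝ) + 1) := by
      rw [hr]; field_simp; ring
    have h3 : (1 - r ^ n) / (1 - r) = ((c : ℝ) + 1) * (1 - r ^ n) := by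
      rw [h2]; field_simp
    have := h0.symm.trans (h1.trans h3)
    linarith [this]
  rw [← Finset.sum_div, Finset.sum_sub_distrib, Finset.sum_add_distrib, hrev, hgeom,
    Finset.sum_const, Nat.card_Icc, nsmul_eq_mul]
  have hcard : ((n - 1 + 1 - 1 : ℕ) : ℝ) = (n : ℝ) - 1 := by
    have h : n - 1 + 1 - 1 = n - 1 := by omega
    rw [h, Nat.cast_sub (by omega : 1 ≤ n)]; norm_num
  rw [hcard]
  congr 1
  ring

theorem stmt12 :
    ∃ A B : ℝ, 0 < A ∧ 0 < B ∧
      ∀ c : ℕ, 1 ≤ c → ∃ N : ℕ, ∀ n : ℕ, N ≤ n →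
        A * (c : ℝ) / (n : ℝ) ≤ pcyc n c ∧ pcyc n c ≤ B * (c : ℝ) / (n : ℝ) := by
  refine ⟨1, 8, one_pos, by norm_num, fun c hc ↦ ?_⟩
  set r : ℝ := (c : ℝ) / ((c : ℝ) + 1) with hr
  have hc1 : (0 : ℝ) < (c : ℝ) + 1 := by positivity
  have hc0 : (0 : ℝ) < (c : ℝ) := by exact_mod_cast hc
  have hr0 : (0:ℝ) ≤ r := by positivity
  have hr1 : r < 1 := by rw [hr, div_lt_one hc1]; linarith
  have h1 : ∀ᶠ n : ℕ in Filter.atTop, ((c : ℝ) + 1) * r ^ n ≤ (c : ℝ) / 4 := by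
    have := (tendsto_pow_atTop_nhds_zero_of_lt_one hr0 hr1).const_mul ((c : ℝ) + 1)
    rw [mul_zero] at this
    exact this.eventually_le_const (by positivity)
  have h2 : ∀ᶠ n : ℕ in Filter.atTop, (n : ℝ) * r ^ n ≤ (c : ℝ) / 4 :=
    (tendsto_self_mul_const_pow_of_lt_one hr0 hr1).eventually_le_const (by positivity)
  have h3 : ∀ᶠ n : ℕ in Filter.atTop, 2 ≤ n := Filter.eventually_ge_atTop 2
  obtain ⟨N, hN⟩ := Filter.eventually_atTop.mp ((h1.and h2).and h3)
  refine ⟨N, fun n hn ↦ ?_⟩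
  obtain ⟨⟨hA, hB⟩, hn2⟩ := hN n hn
  have hn2' : (2 : ℝ) ≤ (n : ℝ) := by exact_mod_cast hn2
  have hs0 : (0:ℝ) ≤ r ^ n := by positivity
  have hs : r ^ n ≤ 1 / 2 := by nlinarith
  have hd1 : (0:ℝ) < (n : ℝ) - 1 := by linarith
  have hn0 : (0:ℝ) < (n : ℝ) := by linarith
  have key := pcyc_sum_eq n c hn2 hc
  unfold pcyc
  rw [← hr] at key ⊢
  rw [key, one_div_mul_eq_div, div_div]
  set s : ℝ := r ^ n with hsdef
  have hden : (0:ℝ) < 1 - s := by linarith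
  have hnum_le : 2 * ((c : ℝ) - ((c : ℝ) + 1) * s) - 2 * ((n : ℝ) - 1) * s ≤ 2 * c := by
    nlinarith
  have hts : ((n : ℝ) - 1) * s ≤ (c : ℝ) / 4 := by nlinarith
  have hnum_ge : (c : ℝ) ≤ 2 * ((c : ℝ) - ((c : ℝ) + 1) * s) - 2 * ((n : ℝ) - 1) * s := by
    nlinarith
  constructor
  · rw [one_mul, div_le_div_iff₀ hn0 (by positivity)]
    nlinarith [mul_nonneg hc0.le (mul_nonneg hs0 hd1.le)]
  · rw [div_le_div_iff₀ (by positivity) hn0]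
    nlinarith [mul_nonneg hc0.le (mul_nonneg (by linarith : (0:ℝ) ≤ 1/2 - s) hd1.le),
      mul_nonneg hc0.le (by linarith : (0:ℝ) ≤ (n:ℝ) - 2)]
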